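/- arXiv:1004.4396 — 3 statements merged into one kernel-verified Lean document; each statement's English description precedes it below -/
import Mathlib

section
/- For every integer k ≥ 1, setting ℓ_k := ⌊(3 + 2√2)^k / 4⌋ (the floor of the real number (3 + 2√2)^k / 4), there exists a natural number m_k with 2 m_k² = ℓ_k (ℓ_k + 1); that is, the triangular number ℓ_k(ℓ_k+1)/2 is a perfect square. -/
private def pp : ℕ → ℕ × ℕ
  | 0 => (1, 0)
  | k+1 => (3 * (pp k).1 + 4 * (pp k).2, 2 * (pp k).1 + 3 * (pp k).2)

private lemma pp_pow (k : ℕ) :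
    ((pp k).1 : ℝ) + (pp k).2 * Real.sqrt 2 = (3 + 2 * Real.sqrt 2) ^ k := by
  induction k with
  | zero => simp [pp]
  | succ k ih =>
    have h2 : Real.sqrt 2 * Real.sqrt 2 = 2 := Real.mul_self_sqrt (by norm_num)
    rw [pow_succ, ← ih]
    show ((3 * (pp k).1 + 4 * (pp k).2 : ℕ) : ℝ) + ((2 * (pp k).1 + 3 * (pp k).2 : ℕ) : ℝ) *
      Real.sqrt 2 = _
    push_cast
    nlinarith [h2]

private lemma pp_norm (k : ℕ) : (pp k).1 ^ 2 = 2 * (pp k).2 ^ 2 + 1 := by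
  induction k with
  | zero => simp [pp]
  | succ k ih =>
    show (3 * (pp k).1 + 4 * (pp k).2) ^ 2 = 2 * (2 * (pp k).1 + 3 * (pp k).2) ^ 2 + 1
    nlinarith [ih]

private lemma pp_parity (k : ℕ) : (pp k).1 % 2 = 1 ∧ (pp k).2 % 2 = 0 := by
  induction k with
  | zero => simp [pp]
  | succ k ih =>
    show (3 * (pp k).1 + 4 * (pp k).2) % 2 = 1 ∧ (2 * (pp k).1 + 3 * (pp k).2) % 2 = 0
    omega

/-- For every integer `k ≥ 1`, with `ℓ_k = ⌊(3 + 2√2)^k / 4⌋`, the triangular number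
`ℓ_k(ℓ_k+1)/2` is a perfect square: there is `m ∈ ℕ` with `2m² = ℓ_k(ℓ_k+1)`. -/
theorem stmt_4 (k : ℕ) (hk : 1 ≤ k) :
    ∃ m : ℕ, 2 * (m : ℤ) ^ 2 =
      ⌊(3 + 2 * Real.sqrt 2) ^ k / 4⌋ * (⌊(3 + 2 * Real.sqrt 2) ^ k / 4⌋ + 1) := by
  obtain ⟨ha, hb⟩ := pp_parity k
  obtain ⟨ℓ, hℓ⟩ : ∃ ℓ, (pp k).1 = 2 * ℓ + 1 := ⟨(pp k).1 / 2, by omega⟩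
  obtain ⟨m, hm⟩ : ∃ m, (pp k).2 = 2 * m := ⟨(pp k).2 / 2, by omega⟩
  have hnorm := pp_norm k
  have h2 : Real.sqrt 2 * Real.sqrt 2 = 2 := Real.mul_self_sqrt (by norm_num)
  have hpow := pp_pow k
  set X : ℝ := (3 + 2 * Real.sqrt 2) ^ k with hX
  set a : ℕ := (pp k).1
  set b : ℕ := (pp k).2
  -- ε = a - b√2 satisfies ε * X = 1 and 0 < ε < 1
  have hεX : ((a : ℝ) - b * Real.sqrt 2) * X = 1 := by
    rw [← hpow]
    have : ((a : ℝ))^2 = 2 * (b:ℝ)^2 + 1 := by exact_mod_cast hnorm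
    nlinarith [h2]
  have hXge : (3 : ℝ) ≤ X := by
    have hs := Real.sqrt_nonneg 2
    have h0 : (1 : ℝ) ≤ 3 + 2 * Real.sqrt 2 := by linarith
    calc (3 : ℝ) ≤ 3 + 2 * Real.sqrt 2 := by linarith
    _ ≤ X := le_self_pow₀ h0 (by omega)
  have hXpos : (0 : ℝ) < X := by linarith
  have hεpos : 0 < (a : ℝ) - b * Real.sqrt 2 := by
    by_contra h
    push_neg at h
    nlinarith
  have hεlt : (a : ℝ) - b * Real.sqrt 2 < 1 := by
    nlinarith
  -- X = 2a - ε = 4ℓ + 2 - ε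
  have hXeq : X = 2 * (a : ℝ) - ((a : ℝ) - b * Real.sqrt 2) := by
    rw [← hpow]; ring
  have hfloor : ⌊X / 4⌋ = (ℓ : ℤ) := by
    rw [Int.floor_eq_iff]
    constructor
    · rw [hXeq]
      have : (a : ℝ) = 2 * ℓ + 1 := by exact_mod_cast congrArg (Nat.cast : ℕ → ℝ) hℓ
      rw [this]
      push_cast
      linarith
    · rw [hXeq]
      have : (a : ℝ) = 2 * ℓ + 1 := by exact_mod_cast congrArg (Nat.cast : ℕ → ℝ) hℓ
      rw [this]
      push_cast
      linarith
  rw [hfloor]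
  refine ⟨m, ?_⟩
  have : (2 * ℓ + 1) ^ 2 = 2 * (2 * m) ^ 2 + 1 := by rw [← hℓ, ← hm]; exact hnorm
  have key : ℓ * (ℓ + 1) = 2 * m ^ 2 := by nlinarith
  exact_mod_cast key.symm
end

section
/- Let ℓ be a real number with 2ℓ a positive integer, and let n be a real number with ℓ − n ∈ ℤ and −ℓ ≤ n ≤ ℓ. Then ℓ(ℓ+1) − (n−1)² ≠ 0, and ℓ · (ℓ+n) · (ℓ−n+1) ≤ 2 · (ℓ(ℓ+1) − (n−1)²)². Equivalently, the nonzero entries √((ℓ+n)(ℓ−n+1)) / ((n−1)² − ℓ(ℓ+1)) of the matrix σ_{ℒ_s}⁻¹ Δ₁₂ σ_{ℒ_s} appearing in the sub-elliptic estimate for the sub-Laplacian on SU(2) are bounded in absolute value by √(2/ℓ). -/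
/-- For `2ℓ` a positive integer and an index `n` with `ℓ − n ∈ ℤ`, `−ℓ ≤ n ≤ ℓ`, one has
`ℓ(ℓ+1) − (n−1)² ≠ 0` and `ℓ(ℓ+n)(ℓ−n+1) ≤ 2(ℓ(ℓ+1) − (n−1)²)²`, i.e. the entries
`√((ℓ+n)(ℓ−n+1)) / ((n−1)² − ℓ(ℓ+1))` of `σ_{ℒ_s}⁻¹ Δ₁₂ σ_{ℒ_s}` are bounded by `√(2/ℓ)`. -/
theorem stmt_6 (ℓ n : ℝ) (a : ℤ) (ha : 0 < a) (hℓ : 2 * ℓ = (a : ℝ))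
    (b : ℤ) (hn : ℓ - n = (b : ℝ)) (hn1 : -ℓ ≤ n) (hn2 : n ≤ ℓ) :
    ℓ * (ℓ + 1) - (n - 1) ^ 2 ≠ 0 ∧
      ℓ * ((ℓ + n) * (ℓ - n + 1)) ≤ 2 * (ℓ * (ℓ + 1) - (n - 1) ^ 2) ^ 2 := by
  have hl : (1:ℝ) ≤ 2 * ℓ := by
    rw [hℓ]; exact_mod_cast ha
  have hc : ℓ + n = ((a - b : ℤ) : ℝ) := by push_cast; linarith
  have hc0 : (0:ℝ) ≤ ℓ + n := by linarith
  have hdich : ℓ + n = 0 ∨ 1 ≤ ℓ + n := by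
    rcases eq_or_lt_of_le hc0 with h | h
    · exact Or.inl h.symm
    · right
      rw [hc] at h ⊢
      exact_mod_cast h
  rcases hdich with h | h
  · constructor
    · nlinarith [sq_nonneg (n - 1)]
    · rw [h, zero_mul, mul_zero]; positivity
  · have hD : ℓ ≤ ℓ * (ℓ + 1) - (n - 1) ^ 2 := by
      nlinarith [mul_nonneg (by linarith : (0:ℝ) ≤ ℓ + n - 1) (by linarith : (0:ℝ) ≤ ℓ - n + 1)]
    constructor
    · exact ne_of_gt (by linarith)
    · nlinarith [mul_nonneg (by linarith : (0:ℝ) ≤ ℓ + n - 1) (by linarith : (0:ℝ) ≤ ℓ - n + 1),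
        sq_nonneg (ℓ + n - 1), sq_nonneg (ℓ - n), mul_nonneg (mul_nonneg (by linarith : (0:ℝ) ≤ ℓ + n - 1) (by linarith : (0:ℝ) ≤ ℓ - n + 1)) (by linarith : (0:ℝ) ≤ ℓ - n),
        mul_nonneg (mul_nonneg (by linarith : (0:ℝ) ≤ ℓ + n - 1) (by linarith : (0:ℝ) ≤ ℓ + n - 1)) (by linarith : (0:ℝ) ≤ ℓ - n + 1)]
end

section
/- Let k ≥ 1 be an integer and c ∈ ℂ, and suppose that (−i m)^k + c ≠ 0 for every half-integer m (i.e., for every m = j/2 with j ∈ ℤ). Then there exists ε > 0 such that |(−i m)^k + c| ≥ ε for every half-integer m. In other words, if the diagonal symbol of ∂_X^k + c on SU(2), with entries (−i m)^k + c, is everywhere nonsingular, then its inverse is uniformly bounded; equivalently, ∂_X^k + c is globally hypoelliptic precisely when c ∉ −(−i)^k · {2^{−k} l^k : l ∈ ℤ}. -/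
/-- Let `k ≥ 1` and `c ∈ ℂ` with `(−i m)^k + c ≠ 0` for every half-integer `m = j/2`.
Then there exists `ε > 0` with `|(−i m)^k + c| ≥ ε` for all half-integers `m`; i.e. the
everywhere-nonsingular diagonal symbol of `∂_X^k + c` on SU(2) has uniformly bounded
inverse. -/
theorem stmt_9 (k : ℕ) (hk : 1 ≤ k) (c : ℂ)
    (hc : ∀ j : ℤ, (-Complex.I * ((j : ℂ) / 2)) ^ k + c ≠ 0) :
    ∃ ε : ℝ, 0 < ε ∧
      ∀ j : ℤ, ε ≤ ‖(-Complex.I * ((j : ℂ) / 2)) ^ k + c‖ := by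
  set f : ℤ → ℝ := fun j => ‖(-Complex.I * ((j : ℂ) / 2)) ^ k + c‖ with hf
  -- magnitude of the leading term
  have habs : ∀ j : ℤ, ‖(-Complex.I * ((j : ℂ) / 2)) ^ k‖
      = (|(j : ℝ)| / 2) ^ k := by
    intro j
    rw [norm_pow, norm_mul, norm_neg, Complex.norm_I, one_mul, norm_div,
      Complex.norm_intCast, Complex.norm_two]
  obtain ⟨N, hN⟩ := exists_nat_ge (2 * (‖c‖ + 1))
  -- for |j| ≥ N, f j ≥ 1
  have hbig : ∀ j : ℤ, (N : ℤ) ≤ |j| → 1 ≤ f j := by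
    intro j hj
    have h1 : ‖c‖ + 1 ≤ |(j : ℝ)| / 2 := by
      have : (N : ℝ) ≤ |(j : ℝ)| := by
        have := hj
        push_cast [← Int.cast_abs] at this ⊢
        exact_mod_cast this
      linarith
    have h2 : |(j : ℝ)| / 2 ≤ (|(j : ℝ)| / 2) ^ k := by
      refine le_self_pow₀ ?_ (by omega)
      have := norm_nonneg c
      linarith
    have h3 : ‖c‖ + 1 ≤ ‖(-Complex.I * ((j : ℂ) / 2)) ^ k‖ := by
      rw [habs]; linarith
    have h4 : ‖(-Complex.I * ((j : ℂ) / 2)) ^ k‖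
        ≤ f j + ‖c‖ := by
      have := norm_add_le ((-Complex.I * ((j : ℂ) / 2)) ^ k + c) (-c)
      simpa [hf] using this
    linarith
  -- finitely many small j
  set S : Finset ℤ := Finset.Icc (-(N : ℤ)) N with hS
  have hS0 : S.Nonempty := ⟨0, by simp [hS]⟩
  set m := S.inf' hS0 f with hm
  have hmpos : 0 < m := by
    rw [hm, Finset.lt_inf'_iff]
    intro j _
    have := hc j
    simpa [hf] using (norm_pos_iff.mpr this)
  refine ⟨min 1 m, lt_min one_pos hmpos, fun j => ?_⟩
  by_cases hj : (N : ℤ) ≤ |j|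
  · exact le_trans (min_le_left _ _) (hbig j hj)
  · have hjS : j ∈ S := by
      rw [hS, Finset.mem_Icc]
      constructor <;> [linarith [neg_abs_le j, not_le.mp hj]; linarith [le_abs_self j, not_le.mp hj]]
    exact le_trans (min_le_right _ _) (Finset.inf'_le f hjS)
end
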